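/- Generalized sector condition (Lemma 1): Let C, G ∈ ℝ^{m_a×n}, ū ∈ ℝ^{m_a} with ū_(i) > 0 for all i, and let x ∈ ℝ^n satisfy |G_(i) x| ≤ ū_(i) for every i = 1,…,m_a (i.e., x ∈ 𝓛(ū)). Then for every diagonal positive definite matrix S ∈ ℝ^{m_a×m_a}, the deadzone nonlinearity satisfies φ(Cx)ᵀ S⁻¹ (φ(Cx) + Cx + Gx) ≤ 0. -/

import Mathlib

open Matrix

/-- Decentralized (componentwise) saturation with bounds `ub`. -/
noncomputable def satv {m : Type*} (ub v : m → ℝ) : m → ℝ :=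
  fun i => Real.sign (v i) * min |v i| (ub i)

/-- Decentralized deadzone nonlinearity. -/
noncomputable def dzv {m : Type*} (ub v : m → ℝ) : m → ℝ :=
  satv ub v - v

lemma dz_term (v w u : ℝ) (hu : 0 < u) (hw : |w| ≤ u) :
    (Real.sign v * min |v| u - v) * ((Real.sign v * min |v| u - v) + v + w) ≤ 0 := by
  rcases le_or_gt |v| u with h | h
  · have hs : Real.sign v * min |v| u = v := by
      rw [min_eq_left h]
      rcases lt_trichotomy v 0 with hv | hv | hv
      · rw [Real.sign_of_neg hv, abs_of_neg hv]; ring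
      · simp [hv]
      · rw [Real.sign_of_pos hv, abs_of_pos hv]; ring
    simp [hs]
  · have hs : min |v| u = u := min_eq_right h.le
    rw [hs]
    rcases lt_trichotomy v 0 with hv | hv | hv
    · rw [Real.sign_of_neg hv]
      have h1 : 0 ≤ -1 * u - v := by
        rw [abs_of_neg hv] at h; linarith
      have h2 : (-1 * u - v) + v + w ≤ 0 := by
        have := abs_le.mp hw; linarith
      nlinarith
    · simp [hv] at h; linarith [abs_nonneg (0:ℝ), h.trans hu]
    · rw [Real.sign_of_pos hv]
      have h1 : 1 * u - v ≤ 0 := by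
        rw [abs_of_pos hv] at h; linarith
      have h2 : 0 ≤ (1 * u - v) + v + w := by
        have := abs_le.mp hw; linarith
      nlinarith

/-- generalized sector condition, Lemma 1: if `x ∈ 𝓛(ū)`,
then for every diagonal positive definite `S`,
`φ(Cx)ᵀ S⁻¹ (φ(Cx) + Cx + Gx) ≤ 0`. -/
theorem stmt1 {ma n : ℕ} (C G : Matrix (Fin ma) (Fin n) ℝ)
    (ub : Fin ma → ℝ) (hub : ∀ i, 0 < ub i)
    (x : Fin n → ℝ) (hx : ∀ i, |(G *ᵥ x) i| ≤ ub i)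
    (S : Matrix (Fin ma) (Fin ma) ℝ)
    (hSdiag : ∃ d : Fin ma → ℝ, S = Matrix.diagonal d) (hS : S.PosDef) :
    dzv ub (C *ᵥ x) ⬝ᵥ (S⁻¹ *ᵥ (dzv ub (C *ᵥ x) + C *ᵥ x + G *ᵥ x)) ≤ 0 := by
  obtain ⟨d, rfl⟩ := hSdiag
  have hd : ∀ i, 0 < d i := by
    intro i
    have hne : (Pi.single i (1:ℝ) : Fin ma → ℝ) ≠ 0 := by
      intro h
      have h1 := congrFun h i
      simp [Pi.single_eq_same] at h1
    have := hS.dotProduct_mulVec_pos hne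
    simpa [Matrix.mulVec_diagonal, dotProduct, Pi.single_apply, Finset.sum_ite_eq',
      mul_comm] using this
  have hinv : (Matrix.diagonal d)⁻¹ = Matrix.diagonal (fun i => (d i)⁻¹) := by
    apply Matrix.inv_eq_right_inv
    rw [Matrix.diagonal_mul_diagonal]
    convert Matrix.diagonal_one using 2
    exact funext fun i => mul_inv_cancel₀ (hd i).ne'
  rw [hinv]
  rw [dotProduct]
  apply Finset.sum_nonpos
  intro i _
  simp only [Matrix.mulVec_diagonal, Pi.add_apply]
  have hterm := dz_term ((C *ᵥ x) i) ((G *ᵥ x) i) (ub i) (hub i) (hx i)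
  have hdi : 0 ≤ (d i)⁻¹ := (inv_pos.mpr (hd i)).le
  have : dzv ub (C *ᵥ x) i = Real.sign ((C *ᵥ x) i) * min |(C *ᵥ x) i| (ub i) - (C *ᵥ x) i := by
    simp [dzv, satv]
  rw [this]
  nlinarith [hterm, hdi]
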